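/- Let M ≥ 1, let P ∈ ℂ^{M×M} be a unitary matrix, and let λ ∈ ℂ be an eigenvalue of P whose algebraic multiplicity equals k. Then for every matrix A ∈ ℂ^{M×M}, the rank of AP − PA is at most 2(M − k). -/

import Mathlib

open scoped Matrix

open Polynomial Matrix


theorem charpoly_sub_smul_one {n : Type*} [Fintype n] [DecidableEq n]
    {R : Type*} [CommRing R] (B : Matrix n n R) (μ : R) :
    (B - μ • (1 : Matrix n n R)).charpoly = B.charpoly.comp (X + C μ) := by
  let f : R[X] →+* R[X] := Polynomial.eval₂RingHom Polynomial.C (X + C μ)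
  have hf : ∀ p : R[X], f p = p.comp (X + C μ) := fun p => rfl
  have hmap : (charmatrix B).map f = charmatrix (B - μ • (1 : Matrix n n R)) := by
    ext i j
    by_cases h : i = j
    · subst h
      simp [hf, charmatrix_apply_eq, Matrix.sub_apply, Matrix.smul_apply, Matrix.one_apply_eq]
      ring
    · simp [hf, charmatrix_apply_ne _ _ _ h, Matrix.sub_apply, Matrix.smul_apply,
        Matrix.one_apply_ne h]
  have hdet := RingHom.map_det f (charmatrix B)
  rw [Matrix.charpoly, Matrix.charpoly, ← hmap]
  rw [show B.charmatrix.map ⇑f = f.mapMatrix B.charmatrix from rfl, ← hdet, hf]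

open scoped ComplexOrder in
theorem ker_pow_of_normal {m : ℕ} (N : Matrix (Fin m) (Fin m) ℂ)
    (hN : Nᴴ * N = N * Nᴴ) :
    ∀ (j : ℕ) (x : Fin m → ℂ), (N ^ j) *ᵥ x = 0 → N *ᵥ x = 0 := by
  have hsq : ∀ x : Fin m → ℂ, (N * N) *ᵥ x = 0 → N *ᵥ x = 0 := by
    intro x hx
    have key : (Nᴴ * N) * (Nᴴ * N) = (N * N)ᴴ * (N * N) := by
      rw [Matrix.conjTranspose_mul]
      calc Nᴴ * N * (Nᴴ * N) = Nᴴ * (N * Nᴴ) * N := by noncomm_ring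
        _ = Nᴴ * (Nᴴ * N) * N := by rw [hN]
        _ = Nᴴ * Nᴴ * (N * N) := by noncomm_ring
    have h1 : ((Nᴴ * N) * (Nᴴ * N)) *ᵥ x = 0 := by
      rw [key, ← Matrix.mulVec_mulVec, hx, Matrix.mulVec_zero]
    have h2 : (Nᴴ * N) *ᵥ x = 0 := by
      have h3 := (Matrix.conjTranspose_mul_self_mulVec_eq_zero (Nᴴ * N) x)
      have h4 : (Nᴴ * N)ᴴ = Nᴴ * N := by
        rw [Matrix.conjTranspose_mul, Matrix.conjTranspose_conjTranspose]
      rw [h4] at h3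
      exact h3.mp h1
    exact (Matrix.conjTranspose_mul_self_mulVec_eq_zero N x).mp h2
  intro j
  induction j with
  | zero =>
    intro x hx
    simp only [pow_zero, Matrix.one_mulVec] at hx
    rw [hx, Matrix.mulVec_zero]
  | succ j ih =>
    intro x hx
    rw [pow_succ, ← Matrix.mulVec_mulVec] at hx
    have := ih _ hx
    rw [Matrix.mulVec_mulVec] at this
    exact hsq x this

open Polynomial in
theorem finrank_ker_sub_smul (M : ℕ) (P : Matrix (Fin M) (Fin M) ℂ) (hP : P * Pᴴ = 1)
    (lam : ℂ) :
    Module.finrank ℂ (LinearMap.ker (Matrix.mulVecLin (P - lam • 1))) =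
      (Matrix.charpoly P).rootMultiplicity lam := by
  set N := P - lam • (1 : Matrix (Fin M) (Fin M) ℂ) with hNdef
  have hP' : Pᴴ * P = 1 := mul_eq_one_comm.mp hP
  have hnormal : Nᴴ * N = N * Nᴴ := by
    simp only [hNdef, Matrix.conjTranspose_sub, Matrix.conjTranspose_smul,
      Matrix.conjTranspose_one, Matrix.sub_mul, Matrix.mul_sub, hP, hP',
      Matrix.smul_mul, Matrix.mul_smul, Matrix.one_mul, Matrix.mul_one, smul_sub, smul_smul]
    rw [mul_comm (star lam) lam]
    abel
  set ψ : Module.End ℂ (Fin M → ℂ) := Matrix.toLinAlgEquiv' N with hψdef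
  have hψapp : ∀ x, ψ x = N *ᵥ x := fun x => rfl
  have hψcp : ψ.charpoly = N.charpoly := by
    rw [← LinearMap.charpoly_toMatrix ψ (Pi.basisFun ℂ (Fin M)),
      LinearMap.toMatrix_eq_toMatrix']
    congr 1
    exact LinearMap.toMatrix'_toLin' N
  have hmax : ψ.maxGenEigenspace 0 = LinearMap.ker ψ := by
    apply le_antisymm
    · intro x hx
      rw [Module.End.mem_maxGenEigenspace] at hx
      obtain ⟨j, hj⟩ := hx
      simp only [zero_smul, sub_zero] at hj
      have hpow : (N ^ j) *ᵥ x = 0 := by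
        have : ψ ^ j = Matrix.toLinAlgEquiv' (N ^ j) := (map_pow _ _ _).symm
        rw [this] at hj
        exact hj
      exact LinearMap.mem_ker.mpr (by rw [hψapp]; exact ker_pow_of_normal N hnormal j x hpow)
    · intro x hx
      rw [Module.End.mem_maxGenEigenspace]
      exact ⟨1, by simpa using LinearMap.mem_ker.mp hx⟩
  have hker : LinearMap.ker (Matrix.mulVecLin N) = LinearMap.ker ψ := rfl
  rw [hker, ← hmax, LinearMap.finrank_maxGenEigenspace_zero_eq, hψcp,
    charpoly_sub_smul_one P lam, Polynomial.rootMultiplicity_eq_natTrailingDegree]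


/-- Let `M ≥ 1`, let `P` be an `M × M` unitary complex matrix, and let
`lam` be an eigenvalue of `P` whose algebraic multiplicity (as a root of the characteristic
polynomial) equals `k`. Then for every matrix `A`, the rank of `A*P - P*A` is at most
`2*(M - k)`. -/
theorem rank_commutator_le_of_eigenvalue_multiplicity
    (M : ℕ) (hM : 1 ≤ M) (P : Matrix (Fin M) (Fin M) ℂ) (hP : P * Pᴴ = 1)
    (lam : ℂ) (hroot : (Matrix.charpoly P).IsRoot lam)
    (k : ℕ) (hk : (Matrix.charpoly P).rootMultiplicity lam = k) :
    ∀ A : Matrix (Fin M) (Fin M) ℂ, (A * P - P * A).rank ≤ 2 * (M - k) := by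
  intro A
  classical
  set N := P - lam • (1 : Matrix (Fin M) (Fin M) ℂ) with hNdef
  set E := LinearMap.ker N.mulVecLin with hEdef
  have hkerE : Module.finrank ℂ E = k := by
    rw [hEdef, finrank_ker_sub_smul M P hP lam, hk]
  set T := (A * P - P * A).mulVecLin with hTdef
  obtain ⟨E', hcompl⟩ := Submodule.exists_isCompl E
  have htot : Module.finrank ℂ (Fin M → ℂ) = M := by
    simp [Module.finrank_pi]
  have hfr : Module.finrank ℂ E + Module.finrank ℂ E' = M := by
    rw [Submodule.finrank_add_eq_of_isCompl hcompl, htot]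
  have hmapE : Submodule.map T E ≤ LinearMap.range N.mulVecLin := by
    rintro _ ⟨v, hv, rfl⟩
    have hv' : N *ᵥ v = 0 := hv
    have hPv : P *ᵥ v = lam • v := by
      have h := hv'
      rw [hNdef, Matrix.sub_mulVec, sub_eq_zero] at h
      rw [h, Matrix.smul_mulVec, Matrix.one_mulVec]
    refine ⟨-(A *ᵥ v), ?_⟩
    show N *ᵥ (-(A *ᵥ v)) = T v
    rw [Matrix.mulVec_neg, hNdef, Matrix.sub_mulVec, hTdef]
    show _ = (A * P - P * A) *ᵥ v
    rw [Matrix.sub_mulVec, ← Matrix.mulVec_mulVec, ← Matrix.mulVec_mulVec, hPv,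
      Matrix.smul_mulVec, Matrix.one_mulVec, Matrix.mulVec_smul]
    abel
  have hrangeN : Module.finrank ℂ (LinearMap.range N.mulVecLin) = M - k := by
    have h := LinearMap.finrank_range_add_finrank_ker N.mulVecLin
    rw [htot, ← hEdef, hkerE] at h
    omega
  have h1 : Module.finrank ℂ (Submodule.map T E) ≤ M - k := by
    rw [← hrangeN]
    exact Submodule.finrank_mono hmapE
  have h2 : Module.finrank ℂ (Submodule.map T E') ≤ M - k := by
    calc Module.finrank ℂ (Submodule.map T E') ≤ Module.finrank ℂ E' :=
        Submodule.finrank_map_le T E'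
      _ ≤ M - k := by omega
  have hrange : LinearMap.range T = Submodule.map T E ⊔ Submodule.map T E' := by
    rw [LinearMap.range_eq_map, ← hcompl.sup_eq_top, Submodule.map_sup]
  have hsup := Submodule.finrank_sup_add_finrank_inf_eq (Submodule.map T E) (Submodule.map T E')
  have : (A * P - P * A).rank = Module.finrank ℂ (LinearMap.range T) := rfl
  rw [this, hrange]
  omega
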